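/- Let the random walk (X_n) on ℤ take steps in {−L,…,−1,1}. For n ≥ 1 let T_n be the first hitting time of site n, and for 0 ≤ i ≤ n−1 and ℓ ∈ [L] let V^n_{i,ℓ} be the number of jumps before time T_n from a site in {i+1, i+2, …} to site i−ℓ+1. Then on the event {T_n < ∞}, T_n = n + 2·Σ_{i<n} V^n_{i,1} + Σ_{i<n} Σ_{ℓ=2}^L V^n_{i,ℓ}, where the sums over i range over all integers i ≤ n−1. -/

import Mathlib

open Finset

theorem stmt13 (L : ℕ) (hL : 0 < L) (X : ℕ → ℤ) (hX0 : X 0 = 0)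
    (hstep : ∀ k, X (k + 1) = X k + 1 ∨
      ∃ ℓ : ℕ, 1 ≤ ℓ ∧ ℓ ≤ L ∧ X (k + 1) = X k - ℓ)
    (n : ℕ) (hn : 1 ≤ n) (T : ℕ) (hT : X T = n) (hTmin : ∀ k < T, X k ≠ (n : ℤ))
    (V : ℤ → ℕ → ℕ)
    (hV : ∀ i ℓ, V i ℓ = ((Finset.range T).filter
        (fun k => i < X k ∧ X (k + 1) = i - ℓ + 1)).card) :
    (T : ℝ) = n + 2 * (∑' i : ℤ, if i ≤ (n : ℤ) - 1 then (V i 1 : ℝ) else 0)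
      + ∑ ℓ ∈ Finset.Icc 2 L, ∑' i : ℤ, if i ≤ (n : ℤ) - 1 then (V i ℓ : ℝ) else 0 := by
  have hbound : ∀ k, k ≤ T → X k ≤ (n : ℤ) := by
    intro k hk
    induction k with
    | zero => rw [hX0]; exact_mod_cast Nat.zero_le n
    | succ k ih =>
      have hkT : k < T := hk
      have h1 : X k ≤ (n : ℤ) := ih hkT.le
      have hne : X k ≠ (n : ℤ) := hTmin k hkT
      rcases hstep k with h | ⟨ℓ, h1', _, h3⟩ <;> omega
  set A : ℕ → Finset ℕ := fun ℓ => (Finset.range T).filter (fun k => X (k+1) + ℓ ≤ X k)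
    with hA
  -- tsum computation
  have hts : ∀ ℓ : ℕ, 1 ≤ ℓ →
      (∑' i : ℤ, if i ≤ (n : ℤ) - 1 then (V i ℓ : ℝ) else 0) = ((A ℓ).card : ℝ) := by
    intro ℓ hℓ
    set g : ℕ → ℤ := fun k => X (k+1) + ℓ - 1 with hg
    have hfib : ∀ i : ℤ, (if i ≤ (n : ℤ) - 1 then (V i ℓ : ℝ) else 0)
        = (((A ℓ).filter (fun k => g k = i)).card : ℝ) := by
      intro i
      have hVeq : V i ℓ = ((A ℓ).filter (fun k => g k = i)).card := by
        rw [hV]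
        congr 1
        rw [hA]
        rw [Finset.filter_filter]
        apply Finset.filter_congr
        intro k _
        simp only [hg, decide_eq_true_eq]
        constructor
        · rintro ⟨h1, h2⟩; omega
        · rintro ⟨h1, h2⟩; omega
      by_cases hi : i ≤ (n : ℤ) - 1
      · rw [if_pos hi, hVeq]
      · rw [if_neg hi]
        have hemp : ((A ℓ).filter (fun k => g k = i)) = ∅ := by
          rw [Finset.filter_eq_empty_iff]
          intro k hk
          rw [hA, Finset.mem_filter, Finset.mem_range] at hk
          have hb := hbound k hk.1.le
          simp only [hg]
          omega
        rw [hemp]; simp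
    have hsupp : ∀ i : ℤ, i ∉ (A ℓ).image g →
        (if i ≤ (n : ℤ) - 1 then (V i ℓ : ℝ) else 0) = 0 := by
      intro i hi
      rw [hfib i]
      have : ((A ℓ).filter (fun k => g k = i)) = ∅ := by
        rw [Finset.filter_eq_empty_iff]
        intro k hk hgk
        exact hi (Finset.mem_image.mpr ⟨k, hk, hgk⟩)
      rw [this]; simp
    rw [tsum_eq_sum hsupp]
    have hcard : (A ℓ).card = ∑ i ∈ (A ℓ).image g, ((A ℓ).filter (fun k => g k = i)).card :=
      Finset.card_eq_sum_card_fiberwise (fun x hx => Finset.mem_image_of_mem g hx)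
    rw [Finset.sum_congr rfl (fun i _ => hfib i)]
    rw [hcard]
    push_cast
    rfl
  -- main counting identity over ℤ
  have hTel : ∑ k ∈ Finset.range T, (X (k+1) - X k) = (n : ℤ) := by
    rw [Finset.sum_range_sub, hT, hX0, sub_zero]
  have hstep' : ∀ k ∈ Finset.range T, X (k+1) - X k
      = 1 - (∑ ℓ ∈ Finset.Icc 1 L, if X (k+1) + ℓ ≤ X k then (1:ℤ) else 0)
        - (if X (k+1) + 1 ≤ X k then (1:ℤ) else 0) := by
    intro k _
    rcases hstep k with h | ⟨ℓ', h1', h2', h3⟩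
    · rw [Finset.sum_eq_zero (fun ℓ hℓ => by
        rw [Finset.mem_Icc] at hℓ
        rw [if_neg (by omega)]),
        if_neg (by omega)]
      omega
    · have hsum : (∑ ℓ ∈ Finset.Icc 1 L, if X (k+1) + ℓ ≤ X k then (1:ℤ) else 0) = ℓ' := by
        have hcong : ∀ ℓ ∈ Finset.Icc 1 L,
            (if X (k+1) + ℓ ≤ X k then (1:ℤ) else 0) = (if ℓ ≤ ℓ' then (1:ℤ) else 0) := by
          intro ℓ _
          by_cases h : ℓ ≤ ℓ'
          · rw [if_pos (by omega), if_pos h]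
          · rw [if_neg (by omega), if_neg h]
        rw [Finset.sum_congr rfl hcong, Finset.sum_boole]
        have : (Finset.Icc 1 L).filter (fun ℓ => ℓ ≤ ℓ') = Finset.Icc 1 ℓ' := by
          ext x
          simp only [Finset.mem_filter, Finset.mem_Icc]
          omega
        rw [this, Nat.card_Icc]
        push_cast
        omega
      rw [hsum, if_pos (by omega)]
      omega
  have hswap : ∑ k ∈ Finset.range T,
      (∑ ℓ ∈ Finset.Icc 1 L, if X (k+1) + ℓ ≤ X k then (1:ℤ) else 0)
      = ∑ ℓ ∈ Finset.Icc 1 L, ((A ℓ).card : ℤ) := by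
    rw [Finset.sum_comm]
    refine Finset.sum_congr rfl (fun ℓ _ => ?_)
    rw [Finset.sum_boole]
  have hA1 : ∑ k ∈ Finset.range T, (if X (k+1) + 1 ≤ X k then (1:ℤ) else 0)
      = ((A 1).card : ℤ) := by
    rw [Finset.sum_boole]
    norm_num [hA]
  have hIcc : ∑ ℓ ∈ Finset.Icc 1 L, ((A ℓ).card : ℤ)
      = ((A 1).card : ℤ) + ∑ ℓ ∈ Finset.Icc 2 L, ((A ℓ).card : ℤ) := by
    have h1 : Finset.Icc 1 L = insert 1 (Finset.Icc 2 L) := by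
      ext x
      simp only [Finset.mem_Icc, Finset.mem_insert]
      omega
    rw [h1, Finset.sum_insert (by simp)]
  have hmain : (T : ℤ) = (n : ℤ) + 2 * ((A 1).card : ℤ)
      + ∑ ℓ ∈ Finset.Icc 2 L, ((A ℓ).card : ℤ) := by
    have h1 := hTel
    rw [Finset.sum_congr rfl hstep'] at h1
    rw [Finset.sum_sub_distrib, Finset.sum_sub_distrib, Finset.sum_const, nsmul_eq_mul,
      mul_one, hswap, hA1, hIcc] at h1
    rw [Finset.card_range] at h1
    omega
  rw [hts 1 le_rfl,
    Finset.sum_congr rfl (fun ℓ hℓ => hts ℓ (by rw [Finset.mem_Icc] at hℓ; omega))]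
  exact_mod_cast hmain
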